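/- For a finitely generated group G, with R_n = Hom(G, S_n) acted on by S_n via conjugation and I_n the set of isomorphism classes of transitive G-actions on n points, one has Σ_{n≥0} (|R_n|/n!)·t^n = exp(Σ_{n≥1} Σ_{M ∈ I_n} t^n/|Aut(M)|) in ℚ[[t]]. -/

import Mathlib

open PowerSeries

/-- The exponential of a power series `F` with zero constant term:
`exp F = Σ_{k≥0} F^k / k!`, defined coefficient-wise
(the sum is finite in each degree since `F` has positive order). -/
noncomputable def expSeries' (F : PowerSeries ℚ) : PowerSeries ℚ :=
  PowerSeries.mk fun n =>
    ∑ k ∈ Finset.range (n + 1), (1 / (k.factorial : ℚ)) * PowerSeries.coeff n (F ^ k)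

namespace ExpAux


/-- partial sums of the exponential -/
noncomputable def pSum (F : PowerSeries ℚ) (N : ℕ) : PowerSeries ℚ :=
  ∑ k ∈ Finset.range (N + 1), (C (1 / (k.factorial : ℚ))) * F ^ k

lemma coeff_pow_eq_zero {F : PowerSeries ℚ} (hF : constantCoeff F = 0) {n k : ℕ}
    (h : n < k) : coeff n (F ^ k) = 0 := by
  have hd : (X : PowerSeries ℚ) ^ k ∣ F ^ k :=
    pow_dvd_pow_of_dvd (X_dvd_iff.mpr hF) k
  obtain ⟨Q, hQ⟩ := hd
  rw [hQ, coeff_X_pow_mul']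
  simp [Nat.not_le_of_lt h]

lemma coeff_expSeries' (F : PowerSeries ℚ) (hF : constantCoeff F = 0) {n N : ℕ}
    (h : n ≤ N) : coeff n (expSeries' F) = coeff n (pSum F N) := by
  rw [expSeries', coeff_mk, pSum, map_sum]
  simp_rw [coeff_C_mul]
  refine Finset.sum_subset (by simp; omega) ?_
  intro k hk hk'
  have : n < k := by simp at hk'; omega
  rw [coeff_pow_eq_zero hF this, mul_zero]

lemma derivative_pSum (F : PowerSeries ℚ) (N : ℕ) :
    d⁄dX ℚ (pSum F (N + 1)) = d⁄dX ℚ F * pSum F N := by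
  rw [pSum, map_sum, Finset.sum_range_succ']
  have h0 : d⁄dX ℚ (C (1 / (Nat.factorial 0) : ℚ) * F ^ 0) = 0 := by
    simp
  rw [h0, add_zero, pSum, Finset.mul_sum]
  refine Finset.sum_congr rfl ?_
  intro k _
  have : d⁄dX ℚ (C (1 / ((k+1).factorial) : ℚ) * F ^ (k+1)) =
      C (1 / ((k+1).factorial) : ℚ) * ((k+1) • (F ^ k * d⁄dX ℚ F)) := by
    rw [Derivation.leibniz, derivative_C, smul_zero, add_zero, Derivation.leibniz_pow]
    simp only [smul_eq_mul, Nat.add_sub_cancel, nsmul_eq_mul]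
  rw [this]
  have hfac : (C (1 / ((k+1).factorial) : ℚ)) * ((k+1 : ℕ) : PowerSeries ℚ)
      = C (1 / (k.factorial) : ℚ) := by
    rw [← map_natCast C (k+1), ← map_mul]
    congr 1
    rw [Nat.factorial_succ]
    push_cast
    field_simp
  rw [nsmul_eq_mul, ← mul_assoc, hfac]
  ring

lemma derivative_expSeries' (F : PowerSeries ℚ) (hF : constantCoeff F = 0) :
    d⁄dX ℚ (expSeries' F) = d⁄dX ℚ F * expSeries' F := by
  ext n
  rw [coeff_derivative, coeff_expSeries' F hF (Nat.le_refl (n+1)),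
    ← coeff_derivative, derivative_pSum, coeff_mul, coeff_mul]
  refine Finset.sum_congr rfl ?_
  intro p hp
  rw [Finset.HasAntidiagonal.mem_antidiagonal] at hp
  rw [coeff_expSeries' F hF (show p.2 ≤ n by omega)]

lemma ode_unique (D E₁ E₂ : PowerSeries ℚ) (h1 : d⁄dX ℚ E₁ = D * E₁)
    (h2 : d⁄dX ℚ E₂ = D * E₂) (h0 : coeff 0 E₁ = coeff 0 E₂) : E₁ = E₂ := by
  ext n
  induction n using Nat.strong_induction_on with
  | _ n ih =>
    match n with
    | 0 => exact h0
    | n + 1 =>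
      have hd : coeff n (d⁄dX ℚ E₁) = coeff n (d⁄dX ℚ E₂) := by
        rw [h1, h2, coeff_mul, coeff_mul]
        refine Finset.sum_congr rfl ?_
        intro p hp
        rw [Finset.HasAntidiagonal.mem_antidiagonal] at hp
        rw [ih p.2 (by omega)]
      rw [coeff_derivative, coeff_derivative] at hd
      have : ((n : ℚ) + 1) ≠ 0 := by positivity
      exact mul_right_cancel₀ this hd

lemma eq_expSeries' (F E : PowerSeries ℚ) (hF : constantCoeff F = 0)
    (hE0 : coeff 0 E = 1) (hODE : d⁄dX ℚ E = d⁄dX ℚ F * E) : E = expSeries' F := by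
  refine ode_unique (d⁄dX ℚ F) E (expSeries' F) hODE (derivative_expSeries' F hF) ?_
  rw [hE0, expSeries', coeff_mk]
  simp




variable {G : Type*} [Group G]

lemma finite_hom [Group.FG G] (H : Type*) [Group H] [Finite H] : Finite (G →* H) := by
  obtain ⟨S, hS, hfin⟩ := Group.fg_iff.mp ‹Group.FG G›
  haveI := hfin.to_subtype
  refine Finite.of_injective (fun φ : G →* H => (fun s : S => φ s)) ?_
  intro φ ψ h
  exact MonoidHom.eq_of_eqOn_dense hS (fun x hx => congrFun h ⟨x, hx⟩)

/-- Restriction of a homomorphism to `Perm` of an invariant predicate. -/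
def restrictHom {α : Type*} (ψ : G →* Equiv.Perm α) (p : α → Prop)
    (h : ∀ g x, p x ↔ p (ψ g x)) : G →* Equiv.Perm {x // p x} where
  toFun g := (ψ g).subtypePerm (fun x => (h g x).symm)
  map_one' := by
    ext x
    simp
  map_mul' g₁ g₂ := by
    ext x
    simp [map_mul, Equiv.Perm.mul_apply]
    rfl

@[simp] lemma restrictHom_apply {α : Type*} (ψ : G →* Equiv.Perm α) (p : α → Prop)
    (h : ∀ g x, p x ↔ p (ψ g x)) (g : G) (x : {x // p x}) :
    ((restrictHom ψ p h) g x : α) = ψ g x := rfl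

/-- Combination of homomorphisms on a predicate and its complement. -/
def combineHom {α : Type*} (p : α → Prop) [DecidablePred p]
    (φ₁ : G →* Equiv.Perm {x // p x}) (φ₂ : G →* Equiv.Perm {x // ¬ p x}) :
    G →* Equiv.Perm α :=
  (Equiv.Perm.subtypeCongrHom p).comp (φ₁.prod φ₂)

lemma combineHom_apply_mem {α : Type*} (p : α → Prop) [DecidablePred p]
    (φ₁ : G →* Equiv.Perm {x // p x}) (φ₂ : G →* Equiv.Perm {x // ¬ p x}) (g : G)
    {x : α} (hx : p x) : combineHom p φ₁ φ₂ g x = φ₁ g ⟨x, hx⟩ := by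
  simp [combineHom, Equiv.Perm.subtypeCongr.left_apply _ _ hx]

lemma combineHom_apply_not_mem {α : Type*} (p : α → Prop) [DecidablePred p]
    (φ₁ : G →* Equiv.Perm {x // p x}) (φ₂ : G →* Equiv.Perm {x // ¬ p x}) (g : G)
    {x : α} (hx : ¬ p x) : combineHom p φ₁ φ₂ g x = φ₂ g ⟨x, hx⟩ := by
  simp [combineHom, Equiv.Perm.subtypeCongr.right_apply _ _ hx]

/-- `Equiv.permCongr` as a `MulEquiv`. -/
def permMulCongr {α β : Type*} (e : α ≃ β) : Equiv.Perm α ≃* Equiv.Perm β :=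
  { e.permCongr with
    map_mul' := fun p q => by
      ext x
      simp [Equiv.permCongr_apply, Equiv.Perm.mul_apply] }

@[simp] lemma permMulCongr_apply {α β : Type*} (e : α ≃ β) (p : Equiv.Perm α) (x : β) :
    permMulCongr e p x = e (p (e.symm x)) := rfl

/-- Transport of `G`-actions along an equivalence. -/
def homCongr {α β : Type*} (e : α ≃ β) :
    (G →* Equiv.Perm α) ≃ (G →* Equiv.Perm β) where
  toFun φ := (permMulCongr e).toMonoidHom.comp φ
  invFun φ := (permMulCongr e.symm).toMonoidHom.comp φ
  left_inv φ := by ext g x; simp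
  right_inv φ := by ext g x; simp

@[simp] lemma homCongr_apply {α β : Type*} (e : α ≃ β) (φ : G →* Equiv.Perm α) (g : G) (x : β) :
    homCongr e φ g x = e (φ g (e.symm x)) := rfl

def IsTransitive {α : Type*} (ψ : G →* Equiv.Perm α) : Prop := ∀ x y : α, ∃ g : G, ψ g x = y

lemma isTransitive_homCongr {α β : Type*} (e : α ≃ β) (φ : G →* Equiv.Perm α) :
    IsTransitive (homCongr e φ) ↔ IsTransitive φ := by
  constructor
  · intro h x y
    obtain ⟨g, hg⟩ := h (e x) (e y)
    refine ⟨g, ?_⟩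
    simpa using congrArg e.symm hg
  · intro h x y
    obtain ⟨g, hg⟩ := h (e.symm x) (e.symm y)
    refine ⟨g, ?_⟩
    simp [hg]

/-- Transport of transitive `G`-actions along an equivalence. -/
def transHomCongr {α β : Type*} (e : α ≃ β) :
    {φ : G →* Equiv.Perm α // IsTransitive φ} ≃ {φ : G →* Equiv.Perm β // IsTransitive φ} :=
  Equiv.subtypeEquiv (homCongr e) (fun φ => (isTransitive_homCongr e φ).symm)



variable (G) in
/-- number of transitive `G`-actions on `Fin n` -/
noncomputable def tC (n : ℕ) : ℕ :=
  Nat.card {ψ : G →* Equiv.Perm (Fin n) // IsTransitive ψ}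

lemma claimA [Group.FG G] (n : ℕ) (T : Finset (G →* Equiv.Perm (Fin n)))
    (htrans : ∀ φ ∈ T, IsTransitive φ)
    (hrep : ∀ ψ : G →* Equiv.Perm (Fin n), IsTransitive ψ →
      ∃! φ : G →* Equiv.Perm (Fin n), φ ∈ T ∧
        ∃ σ : Equiv.Perm (Fin n), ∀ g : G, σ * ψ g * σ⁻¹ = φ g) :
    (tC G n : ℚ) = n.factorial * ∑ φ ∈ T, (1 : ℚ) /
      Nat.card (Subgroup.centralizer (Set.range (⇑φ)) : Subgroup (Equiv.Perm (Fin n))) := by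
  classical
  haveI : Finite (G →* Equiv.Perm (Fin n)) := finite_hom _
  haveI : Fintype {ψ : G →* Equiv.Perm (Fin n) // IsTransitive ψ} := Fintype.ofFinite _
  set Ω := {ψ : G →* Equiv.Perm (Fin n) // IsTransitive ψ}
  -- the classifying map
  have hex : ∀ ψ : Ω, ∃ φ : G →* Equiv.Perm (Fin n), φ ∈ T ∧
      ∃ σ : Equiv.Perm (Fin n), ∀ g : G, σ * ψ.1 g * σ⁻¹ = φ g :=
    fun ψ => (hrep ψ.1 ψ.2).exists
  set c : Ω → G →* Equiv.Perm (Fin n) := fun ψ => (hex ψ).choose with hc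
  have hcT : ∀ ψ : Ω, c ψ ∈ T := fun ψ => (hex ψ).choose_spec.1
  have hcσ : ∀ ψ : Ω, ∃ σ : Equiv.Perm (Fin n), ∀ g : G, σ * ψ.1 g * σ⁻¹ = c ψ g :=
    fun ψ => (hex ψ).choose_spec.2
  have hcu : ∀ ψ : Ω, ∀ φ : G →* Equiv.Perm (Fin n), φ ∈ T →
      (∃ σ : Equiv.Perm (Fin n), ∀ g : G, σ * ψ.1 g * σ⁻¹ = φ g) → c ψ = φ := by
    intro ψ φ hφ hσ
    obtain ⟨φ', -, hu⟩ := hrep ψ.1 ψ.2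
    rw [hu (c ψ) ⟨hcT ψ, hcσ ψ⟩, hu φ ⟨hφ, hσ⟩]
  -- fiberwise count
  have hcard : Fintype.card Ω = ∑ φ ∈ T, (Finset.univ.filter fun ψ : Ω => c ψ = φ).card := by
    exact Finset.card_eq_sum_card_fiberwise (fun ψ _ => hcT ψ)
  -- fiber over φ : for φ ∈ T
  have hfiber : ∀ φ ∈ T, ((Finset.univ.filter fun ψ : Ω => c ψ = φ).card : ℚ) =
      n.factorial * ((1 : ℚ) /
        Nat.card (Subgroup.centralizer (Set.range (⇑φ)) : Subgroup (Equiv.Perm (Fin n)))) := by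
    intro φ hφ
    set C := (Subgroup.centralizer (Set.range (⇑φ)) : Subgroup (Equiv.Perm (Fin n)))
    -- the conjugate homs
    have htφ : IsTransitive φ := htrans φ hφ
    set mm : Equiv.Perm (Fin n) → (G →* Equiv.Perm (Fin n)) :=
      fun σ => (MulAut.conj σ).toMonoidHom.comp φ with hmm
    have hmm_apply : ∀ σ g, mm σ g = σ * φ g * σ⁻¹ := fun σ g => rfl
    have hmm_trans : ∀ σ, IsTransitive (mm σ) := by
      intro σ x y
      obtain ⟨g, hg⟩ := htφ (σ⁻¹ x) (σ⁻¹ y)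
      refine ⟨g, ?_⟩
      rw [hmm_apply]
      simp only [Equiv.Perm.mul_apply]
      rw [hg]
      simp
    have hmm_c : ∀ σ, c ⟨mm σ, hmm_trans σ⟩ = φ := by
      intro σ
      refine hcu _ φ hφ ⟨σ⁻¹, ?_⟩
      intro g
      rw [hmm_apply]
      group
    -- the equivalence with the quotient
    have hmm_eq : ∀ σ₁ σ₂, mm σ₁ = mm σ₂ ↔ σ₁⁻¹ * σ₂ ∈ C := by
      intro σ₁ σ₂
      constructor
      · intro h
        rw [Subgroup.mem_centralizer_iff]
        rintro x ⟨g, rfl⟩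
        have := congrArg (fun ψ : G →* Equiv.Perm (Fin n) => ψ g) h
        simp only [hmm_apply] at this
        have h2 : φ g * (σ₁⁻¹ * σ₂) = σ₁⁻¹ * (σ₁ * φ g * σ₁⁻¹) * σ₂ := by group
        rw [this] at h2
        rw [h2]
        group
      · intro h ; ext g : 1
        rw [Subgroup.mem_centralizer_iff] at h
        have := h (φ g) ⟨g, rfl⟩
        rw [hmm_apply, hmm_apply]
        have h2 : σ₁ * (φ g * (σ₁⁻¹ * σ₂)) * σ₂⁻¹ = σ₁ * φ g * σ₁⁻¹ := by group
        rw [this] at h2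
        rw [← h2]
        group
    have e : (Equiv.Perm (Fin n) ⧸ C) ≃ {ψ : Ω // c ψ = φ} := by
      refine Equiv.ofBijective (Quotient.lift
        (fun σ => (⟨⟨mm σ, hmm_trans σ⟩, hmm_c σ⟩ : {ψ : Ω // c ψ = φ})) ?_) ⟨?_, ?_⟩
      · intro σ₁ σ₂ h
        have h' : σ₁⁻¹ * σ₂ ∈ C := QuotientGroup.leftRel_apply.mp h
        have : mm σ₁ = mm σ₂ := (hmm_eq σ₁ σ₂).mpr h'
        simp only [Subtype.mk.injEq]
        exact Subtype.ext this
      · intro q₁ q₂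
        induction q₁ using Quotient.inductionOn with | _ σ₁ =>
        induction q₂ using Quotient.inductionOn with | _ σ₂ =>
        intro h
        simp only [Quotient.lift_mk, Subtype.mk.injEq] at h
        have : mm σ₁ = mm σ₂ := congrArg (fun x => x.1) h
        exact Quotient.sound (QuotientGroup.leftRel_apply.mpr ((hmm_eq σ₁ σ₂).mp this))
      · rintro ⟨⟨ψ, hψt⟩, hψc⟩
        obtain ⟨σ, hσ⟩ := by
          have := hcσ ⟨ψ, hψt⟩
          rwa [hψc] at this
        refine ⟨QuotientGroup.mk σ⁻¹, ?_⟩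
        simp only [Quotient.lift_mk, Subtype.mk.injEq]
        refine Subtype.ext ?_
        ext g : 1
        rw [hmm_apply]
        have := hσ g
        rw [← this]
        group
    -- count
    have h1 : Nat.card (Equiv.Perm (Fin n)) = Nat.card (Equiv.Perm (Fin n) ⧸ C) * Nat.card C :=
      Subgroup.card_eq_card_quotient_mul_card_subgroup C
    have h2 : Nat.card (Equiv.Perm (Fin n)) = n.factorial := by
      rw [Nat.card_eq_fintype_card, Fintype.card_perm, Fintype.card_fin]
    have h3 : ((Finset.univ.filter fun ψ : Ω => c ψ = φ).card : ℕ) =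
        Nat.card (Equiv.Perm (Fin n) ⧸ C) := by
      rw [← Fintype.card_subtype, ← Nat.card_eq_fintype_card, Nat.card_congr e.symm]
    have hCpos : 0 < Nat.card C := Nat.card_pos
    rw [h3]
    rw [h2] at h1
    have hq : (Nat.card (Equiv.Perm (Fin n) ⧸ C) : ℚ) * (Nat.card C : ℚ) = n.factorial := by
      exact_mod_cast h1.symm
    rw [mul_one_div, eq_div_iff (by exact_mod_cast hCpos.ne')]
    exact hq
  -- assemble
  have : (tC G n : ℚ) = ∑ φ ∈ T, ((Finset.univ.filter fun ψ : Ω => c ψ = φ).card : ℚ) := by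
    rw [tC, Nat.card_eq_fintype_card, hcard]
    push_cast
    rfl
  rw [this, Finset.sum_congr rfl hfiber, Finset.mul_sum]



variable (G) in
noncomputable def rC (n : ℕ) : ℕ := Nat.card (G →* Equiv.Perm (Fin n))

section ClaimB

variable [Group.FG G] (n : ℕ)

/-- the orbit of `0` under a `G`-action on `Fin (n+1)` -/
noncomputable def Orb (ψ : G →* Equiv.Perm (Fin (n + 1))) : Finset (Fin (n + 1)) :=
  @Finset.filter _ (fun x => ∃ g : G, ψ g 0 = x) (Classical.decPred _) Finset.univ

lemma mem_Orb (ψ : G →* Equiv.Perm (Fin (n + 1))) (x : Fin (n + 1)) :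
    x ∈ Orb n ψ ↔ ∃ g : G, ψ g 0 = x := by
  simp [Orb]

lemma zero_mem_Orb (ψ : G →* Equiv.Perm (Fin (n + 1))) : (0 : Fin (n + 1)) ∈ Orb n ψ :=
  (mem_Orb n ψ 0).mpr ⟨1, by simp⟩

lemma Orb_inv (ψ : G →* Equiv.Perm (Fin (n + 1))) (g : G) (x : Fin (n + 1)) :
    x ∈ Orb n ψ ↔ ψ g x ∈ Orb n ψ := by
  rw [mem_Orb, mem_Orb]
  constructor
  · rintro ⟨h, rfl⟩
    exact ⟨g * h, by rw [map_mul, Equiv.Perm.mul_apply]⟩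
  · rintro ⟨h, hh⟩
    refine ⟨g⁻¹ * h, ?_⟩
    rw [map_mul, Equiv.Perm.mul_apply, hh, map_inv, Equiv.Perm.inv_def, Equiv.symm_apply_apply]

/-- The fiber of the orbit map over `A` is in bijection with pairs of a transitive action
on `A` and an arbitrary action on the complement. -/
noncomputable def fiberEquiv (A : Finset (Fin (n + 1))) (h0 : (0 : Fin (n + 1)) ∈ A) :
    ({φ : G →* Equiv.Perm {x : Fin (n + 1) // x ∈ A} // IsTransitive φ} ×
      (G →* Equiv.Perm {x : Fin (n + 1) // ¬ x ∈ A})) ≃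
    {ψ : G →* Equiv.Perm (Fin (n + 1)) // Orb n ψ = A} := by
  refine Equiv.ofBijective (fun p =>
    ⟨combineHom (fun x => x ∈ A) p.1.1 p.2, ?_⟩) ⟨?_, ?_⟩
  · -- Orb of the combination is A
    ext x
    rw [mem_Orb]
    constructor
    · rintro ⟨g, rfl⟩
      rw [combineHom_apply_mem _ _ _ _ h0]
      exact (p.1.1 g ⟨0, h0⟩).2
    · intro hx
      obtain ⟨g, hg⟩ := p.1.2 ⟨0, h0⟩ ⟨x, hx⟩
      refine ⟨g, ?_⟩
      rw [combineHom_apply_mem _ _ _ _ h0, hg]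
  · -- injective
    rintro ⟨⟨φ₁, ht₁⟩, χ₁⟩ ⟨⟨φ₂, ht₂⟩, χ₂⟩ h
    have hcomb : combineHom (fun x => x ∈ A) φ₁ χ₁ = combineHom (fun x => x ∈ A) φ₂ χ₂ :=
      congrArg Subtype.val h
    have happ : ∀ (g : G) (x : Fin (n + 1)),
        combineHom (fun x => x ∈ A) φ₁ χ₁ g x = combineHom (fun x => x ∈ A) φ₂ χ₂ g x := by
      intro g x; rw [hcomb]
    refine Prod.ext (Subtype.ext ?_) ?_
    · ext g x
      have := happ g x.1
      rw [combineHom_apply_mem _ _ _ _ x.2, combineHom_apply_mem _ _ _ _ x.2] at this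
      exact congrArg Fin.val this
    · ext g x
      have := happ g x.1
      rw [combineHom_apply_not_mem _ _ _ _ x.2, combineHom_apply_not_mem _ _ _ _ x.2] at this
      exact congrArg Fin.val this
  · -- surjective
    rintro ⟨ψ, hψ⟩
    have hinv : ∀ (g : G) (x : Fin (n + 1)), x ∈ A ↔ ψ g x ∈ A := by
      intro g x
      rw [← hψ]
      exact Orb_inv n ψ g x
    have hinv' : ∀ (g : G) (x : Fin (n + 1)), ¬ x ∈ A ↔ ¬ ψ g x ∈ A :=
      fun g x => not_congr (hinv g x)
    have htr : IsTransitive (restrictHom ψ (fun x => x ∈ A) hinv) := by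
      rintro ⟨u, hu⟩ ⟨v, hv⟩
      rw [← hψ, mem_Orb] at hu hv
      obtain ⟨h₁, hh₁⟩ := hu
      obtain ⟨h₂, hh₂⟩ := hv
      refine ⟨h₂ * h₁⁻¹, Subtype.ext ?_⟩
      rw [restrictHom_apply, map_mul, Equiv.Perm.mul_apply]
      show (ψ h₂) ((ψ h₁⁻¹) u) = v
      rw [map_inv, ← hh₁, Equiv.Perm.inv_def, Equiv.symm_apply_apply, hh₂]
    refine ⟨⟨⟨restrictHom ψ (fun x => x ∈ A) hinv, htr⟩,
      restrictHom ψ (fun x => ¬ x ∈ A) hinv'⟩, ?_⟩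
    refine Subtype.ext ?_
    ext g x
    by_cases hx : x ∈ A
    · rw [combineHom_apply_mem _ _ _ _ hx, restrictHom_apply]
    · rw [combineHom_apply_not_mem _ _ _ _ hx, restrictHom_apply]

lemma fiber_card (A : Finset (Fin (n + 1))) (h0 : (0 : Fin (n + 1)) ∈ A) :
    Nat.card {ψ : G →* Equiv.Perm (Fin (n + 1)) // Orb n ψ = A} =
      tC G A.card * rC G (n + 1 - A.card) := by
  classical
  rw [← Nat.card_congr (fiberEquiv n A h0), Nat.card_prod]
  congr 1
  · rw [tC, Nat.card_congr (transHomCongr A.equivFin)]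
  · have hcard : Fintype.card {x : Fin (n + 1) // ¬ x ∈ A} = n + 1 - A.card := by
      simp [Fintype.card_subtype_compl]
    rw [rC, Nat.card_congr (homCongr (Fintype.equivFinOfCardEq hcard))]

lemma claimB : rC G (n + 1) =
    ∑ i ∈ Finset.range (n + 1), n.choose i * (tC G (i + 1) * rC G (n - i)) := by
  classical
  haveI : Finite (G →* Equiv.Perm (Fin (n + 1))) := finite_hom _
  haveI : Fintype (G →* Equiv.Perm (Fin (n + 1))) := Fintype.ofFinite _
  set B : Finset (Finset (Fin (n + 1))) :=
    Finset.univ.filter (fun A => (0 : Fin (n + 1)) ∈ A) with hB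
  have hmain : rC G (n + 1) = ∑ A ∈ B, tC G A.card * rC G (n + 1 - A.card) := by
    have h1 : Fintype.card (G →* Equiv.Perm (Fin (n + 1))) =
        ∑ A ∈ B, (Finset.univ.filter fun ψ : G →* Equiv.Perm (Fin (n + 1)) =>
          Orb n ψ = A).card := by
      refine Finset.card_eq_sum_card_fiberwise (fun ψ _ => ?_)
      rw [hB, Finset.mem_coe, Finset.mem_filter]
      exact ⟨Finset.mem_univ _, zero_mem_Orb n ψ⟩
    rw [rC, Nat.card_eq_fintype_card, h1]
    refine Finset.sum_congr rfl (fun A hA => ?_)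
    rw [hB, Finset.mem_filter] at hA
    rw [← fiber_card n A hA.2, ← Fintype.card_subtype, Nat.card_eq_fintype_card]
  rw [hmain]
  -- regroup by cardinality
  have hmaps : ∀ A ∈ B, A.card - 1 ∈ Finset.range (n + 1) := by
    intro A hA
    rw [hB, Finset.mem_filter] at hA
    have h1 : 1 ≤ A.card := Finset.card_pos.mpr ⟨0, hA.2⟩
    have h2 : A.card ≤ n + 1 := by
      simpa using Finset.card_le_card (Finset.subset_univ A)
    rw [Finset.mem_range]
    omega
  rw [← Finset.sum_fiberwise_of_maps_to hmaps
    (fun A => tC G A.card * rC G (n + 1 - A.card))]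
  refine Finset.sum_congr rfl (fun i hi => ?_)
  rw [Finset.mem_range] at hi
  have hcardA : ∀ A ∈ B.filter (fun A => A.card - 1 = i), A.card = i + 1 := by
    intro A hA
    rw [Finset.mem_filter, hB, Finset.mem_filter] at hA
    have h1 : 1 ≤ A.card := Finset.card_pos.mpr ⟨0, hA.1.2⟩
    omega
  have hsub : n + 1 - (i + 1) = n - i := by omega
  rw [Finset.sum_congr rfl (fun A hA => by
    rw [hcardA A hA, hsub])]
  rw [Finset.sum_const, smul_eq_mul]
  congr 1
  -- count the subsets
  have hcount : (Finset.filter (fun A => A.card - 1 = i) B).card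
      = (Finset.powersetCard i (Finset.univ.erase (0 : Fin (n + 1)))).card := by
    refine Finset.card_bij (fun A _ => A.erase 0) ?_ ?_ ?_
    · intro A hA
      rw [Finset.mem_filter, hB, Finset.mem_filter] at hA
      rw [Finset.mem_powersetCard]
      refine ⟨Finset.erase_subset_erase _ (Finset.subset_univ A), ?_⟩
      rw [Finset.card_erase_of_mem hA.1.2]
      exact hA.2
    · intro A₁ hA₁ A₂ hA₂ h
      rw [Finset.mem_filter, hB, Finset.mem_filter] at hA₁ hA₂
      rw [← Finset.insert_erase hA₁.1.2, ← Finset.insert_erase hA₂.1.2, h]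
    · intro S hS
      rw [Finset.mem_powersetCard] at hS
      have h0S : (0 : Fin (n + 1)) ∉ S := fun h => by
        have := hS.1 h
        simp at this
      refine ⟨insert 0 S, ?_, ?_⟩
      · rw [Finset.mem_filter, hB, Finset.mem_filter]
        refine ⟨⟨Finset.mem_univ _, Finset.mem_insert_self _ _⟩, ?_⟩
        rw [Finset.card_insert_of_notMem h0S, hS.2]
        omega
      · simpa using Finset.erase_insert h0S
  rw [hcount, Finset.card_powersetCard, Finset.card_erase_of_mem (Finset.mem_univ _),
    Finset.card_univ, Fintype.card_fin]
  simp

end ClaimB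


lemma rC_zero {G : Type*} [Group G] : rC G 0 = 1 := by
  haveI : Subsingleton (G →* Equiv.Perm (Fin 0)) :=
    ⟨fun φ ψ => MonoidHom.ext fun g => Subsingleton.elim _ _⟩
  haveI : Unique (G →* Equiv.Perm (Fin 0)) := uniqueOfSubsingleton 1
  exact Nat.card_unique

end ExpAux

/-- The exponential formula for `G`-sets: for a finitely generated group `G`, with
`R_n = Hom(G, S_n)` and `I_n` the isomorphism classes of transitive `G`-actions on `n`
points (represented by a transversal `T n` of transitive homomorphisms `G →* S_n` up to
conjugation, the automorphism group of the `G`-set attached to `φ` being the centralizer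
of the image of `φ` in `S_n`):
`Σ_{n≥0} (|R_n|/n!) t^n = exp (Σ_{n≥1} Σ_{M ∈ I_n} t^n / |Aut(M)|)` in `ℚ[[t]]`. -/
theorem exponential_formula_G_sets (G : Type*) [Group G] [Group.FG G]
    (T : (n : ℕ) → Finset (G →* Equiv.Perm (Fin n)))
    (htrans : ∀ n, ∀ φ ∈ T n, ∀ x y : Fin n, ∃ g : G, φ g x = y)
    (hrep : ∀ (n : ℕ) (ψ : G →* Equiv.Perm (Fin n)), (∀ x y : Fin n, ∃ g : G, ψ g x = y) →
      ∃! φ : G →* Equiv.Perm (Fin n), φ ∈ T n ∧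
        ∃ σ : Equiv.Perm (Fin n), ∀ g : G, σ * ψ g * σ⁻¹ = φ g) :
    (PowerSeries.mk fun n => (Nat.card (G →* Equiv.Perm (Fin n)) : ℚ) / n.factorial) =
      expSeries' (PowerSeries.mk fun n => if n = 0 then (0 : ℚ) else
        ∑ φ ∈ T n, (1 : ℚ) /
          Nat.card (Subgroup.centralizer (Set.range (⇑φ)) : Subgroup (Equiv.Perm (Fin n)))) := by
  classical
  show (PowerSeries.mk fun n => (ExpAux.rC G n : ℚ) / n.factorial) = _
  set F : PowerSeries ℚ := PowerSeries.mk fun n => if n = 0 then (0 : ℚ) else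
      ∑ φ ∈ T n, (1 : ℚ) /
        Nat.card (Subgroup.centralizer (Set.range (⇑φ)) : Subgroup (Equiv.Perm (Fin n)))
    with hF
  have hS : ∀ k : ℕ, (∑ φ ∈ T k, (1 : ℚ) /
      Nat.card (Subgroup.centralizer (Set.range (⇑φ)) : Subgroup (Equiv.Perm (Fin k))))
      = (ExpAux.tC G k : ℚ) / k.factorial := by
    intro k
    have h := ExpAux.claimA k (T k) (htrans k) (hrep k)
    have hk : (k.factorial : ℚ) ≠ 0 := by exact_mod_cast k.factorial_ne_zero
    field_simp [h]
    rw [h]; ring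
  have hF0 : constantCoeff F = 0 := by
    rw [hF, ← coeff_zero_eq_constantCoeff, coeff_mk]
    simp
  refine ExpAux.eq_expSeries' F _ hF0 ?_ ?_
  · rw [coeff_mk]
    rw [show ExpAux.rC G 0 = 1 from ExpAux.rC_zero]
    simp
  · ext m
    rw [coeff_derivative, coeff_mk, coeff_mul,
      Finset.Nat.sum_antidiagonal_eq_sum_range_succ_mk]
    have hdF : ∀ k : ℕ, coeff k (d⁄dX ℚ F) =
        ((ExpAux.tC G (k + 1) : ℚ) / (k + 1).factorial) * (k + 1) := by
      intro k
      rw [coeff_derivative, hF, coeff_mk, if_neg (Nat.succ_ne_zero k), hS (k + 1)]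
    simp_rw [hdF, coeff_mk]
    have hB := ExpAux.claimB (G := G) m
    have hBQ : (ExpAux.rC G (m + 1) : ℚ) = ∑ k ∈ Finset.range (m + 1),
        (m.choose k : ℚ) * ((ExpAux.tC G (k + 1) : ℚ) * (ExpAux.rC G (m - k) : ℚ)) := by
      rw [hB]
      push_cast
      rfl
    rw [hBQ, Finset.sum_div, Finset.sum_mul]
    refine Finset.sum_congr rfl (fun k hk => ?_)
    rw [Finset.mem_range] at hk
    have hk' : k ≤ m := by omega
    have key : (m.choose k : ℚ) * k.factorial * (m - k).factorial = m.factorial := by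
      exact_mod_cast Nat.choose_mul_factorial_mul_factorial hk'
    have h1 : ((m + 1).factorial : ℚ) = (m + 1) * m.factorial := by
      exact_mod_cast Nat.factorial_succ m
    have h2 : ((k + 1).factorial : ℚ) = (k + 1) * k.factorial := by
      exact_mod_cast Nat.factorial_succ k
    have hm : (m.factorial : ℚ) ≠ 0 := by exact_mod_cast m.factorial_ne_zero
    have hkf : (k.factorial : ℚ) ≠ 0 := by exact_mod_cast k.factorial_ne_zero
    have hmk : ((m - k).factorial : ℚ) ≠ 0 := by exact_mod_cast (m - k).factorial_ne_zero
    have hm1 : ((m : ℚ) + 1) ≠ 0 := by positivity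
    have hk1 : ((k : ℚ) + 1) ≠ 0 := by positivity
    rw [h1, h2]
    field_simp
    linear_combination ((ExpAux.tC G (k + 1) : ℚ) * (ExpAux.rC G (m - k) : ℚ) *
      (1 : ℚ)) * key
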